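/- Let Z be a nonempty set, ≻ a binary relation on lotteries over Z, and u : Z → ℝ such that for all lotteries p, q: p ≻ q if and only if E_p[u] > E_q[u]. Then a function u† : Z → ℝ satisfies (for all lotteries p, q: p ≻ q if and only if E_p[u†] > E_q[u†]) if and only if there exist a > 0 and b ∈ ℝ with u†(z) = a·u(z) + b for all z ∈ Z. -/
import Mathlib


open scoped BigOperators

/-- A lottery over `Z`: a finitely supported nonnegative function summing to one. -/
structure Lottery (Z : Type*) where
  w : Z →₀ ℝ
  nonneg : ∀ z, 0 ≤ w z
  total : w.sum (fun _ x => x) = 1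

/-- The mixture `α·p + (1-α)·q` of two lotteries (defined to be `p` if `α ∉ [0,1]`). -/
noncomputable def Lottery.mix {Z : Type*} (α : ℝ) (p q : Lottery Z) : Lottery Z :=
  if h : 0 ≤ α ∧ α ≤ 1 then
    { w := α • p.w + (1 - α) • q.w
      nonneg := by
        intro z
        have hp := p.nonneg z
        have hq := q.nonneg z
        have h1 : (0:ℝ) ≤ 1 - α := by linarith [h.2]
        rw [Finsupp.add_apply, Finsupp.smul_apply, Finsupp.smul_apply,
          smul_eq_mul, smul_eq_mul]
        nlinarith [h.1]
      total := by
        rw [Finsupp.sum_add_index' (fun _ => rfl) (fun _ _ _ => rfl)]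
        rw [Finsupp.sum_smul_index (fun _ => rfl), Finsupp.sum_smul_index (fun _ => rfl)]
        rw [← Finsupp.mul_sum, ← Finsupp.mul_sum, p.total, q.total]
        ring }
  else p

/-- Expected utility of a lottery `p` with respect to utility `u`. -/
noncomputable def EU {Z : Type*} (u : Z → ℝ) (p : Lottery Z) : ℝ :=
  p.w.sum fun z x => x * u z

/-- The von Neumann–Morgenstern axioms for a strict preference relation on lotteries. -/
def VNM {Z : Type*} (pr : Lottery Z → Lottery Z → Prop) : Prop :=
  -- Asymmetry
  (∀ p q, pr p q → ¬ pr q p) ∧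
  -- Negative transitivity
  (∀ p q r, ¬ pr p q → ¬ pr q r → ¬ pr p r) ∧
  -- Independence
  (∀ p q r, pr p q → ∀ α : ℝ, 0 < α → α ≤ 1 →
      pr (Lottery.mix α p r) (Lottery.mix α q r)) ∧
  -- Continuity
  (∀ p q r, pr p q → pr q r →
      ∃ α β : ℝ, 0 < α ∧ α < 1 ∧ 0 < β ∧ β < 1 ∧
        pr (Lottery.mix α p r) q ∧ pr q (Lottery.mix β p r))

noncomputable def dirac {Z : Type*} (z : Z) : Lottery Z :=
  ⟨Finsupp.single z 1,
   fun z' => by classical simp [Finsupp.single_apply]; split <;> norm_num,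
   by rw [Finsupp.sum_single_index rfl]⟩

lemma EU_dirac {Z : Type*} (u : Z → ℝ) (z : Z) : EU u (dirac z) = u z := by
  unfold EU dirac
  rw [Finsupp.sum_single_index (by ring)]
  ring

lemma EU_mix {Z : Type*} (u : Z → ℝ) (p q : Lottery Z) {α : ℝ} (h0 : 0 ≤ α) (h1 : α ≤ 1) :
    EU u (Lottery.mix α p q) = α * EU u p + (1 - α) * EU u q := by
  unfold Lottery.mix
  rw [dif_pos ⟨h0, h1⟩]
  unfold EU
  rw [Finsupp.sum_add_index' (fun _ => by simp) (fun _ _ _ => by ring)]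
  rw [Finsupp.sum_smul_index (fun _ => by simp), Finsupp.sum_smul_index (fun _ => by simp)]
  rw [Finsupp.mul_sum, Finsupp.mul_sum]
  congr 1 <;> exact Finsupp.sum_congr (fun z _ => by ring)

lemma EU_affine {Z : Type*} (u : Z → ℝ) (a b : ℝ) (p : Lottery Z) :
    EU (fun z => a * u z + b) p = a * EU u p + b := by
  unfold EU
  have h : (p.w.sum fun z x => x * (a * u z + b))
      = p.w.sum fun z x => a * (x * u z) + b * x :=
    Finsupp.sum_congr fun z _ => by ring
  rw [h, Finsupp.sum_add, ← Finsupp.mul_sum, ← Finsupp.mul_sum, p.total, mul_one]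

/-- **Uniqueness of the expected utility representation up to positive affine
transformation.** If `u` represents `≻` via expected utility, then `u†` also
represents `≻` if and only if `u† = a·u + b` for some `a > 0` and `b ∈ ℝ`. -/
theorem expected_utility_representation_unique_iff_positive_affine
    {Z : Type*} [Nonempty Z] (pr : Lottery Z → Lottery Z → Prop) (u : Z → ℝ)
    (hrep : ∀ p q : Lottery Z, pr p q ↔ EU u p > EU u q) (u' : Z → ℝ) :
    (∀ p q : Lottery Z, pr p q ↔ EU u' p > EU u' q) ↔
      ∃ (a b : ℝ), 0 < a ∧ ∀ z : Z, u' z = a * u z + b := by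
  constructor
  · intro hc
    have hiff : ∀ p q : Lottery Z, EU u p > EU u q ↔ EU u' p > EU u' q :=
      fun p q => (hrep p q).symm.trans (hc p q)
    have heq : ∀ p q : Lottery Z, EU u p = EU u q → EU u' p = EU u' q := by
      intro p q h
      by_contra hne
      rcases lt_or_gt_of_ne hne with h1 | h1
      · have := (hiff q p).mpr h1; linarith
      · have := (hiff p q).mpr h1; linarith
    by_cases hconst : ∀ z z' : Z, u z = u z'
    · obtain z0 := Classical.arbitrary Z
      refine ⟨1, u' z0 - u z0, one_pos, fun z => ?_⟩
      have h1 : u z = u z0 := hconst z z0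
      have h2 := heq (dirac z) (dirac z0) (by rw [EU_dirac, EU_dirac, h1])
      rw [EU_dirac, EU_dirac] at h2
      rw [h2, h1]; ring
    · push_neg at hconst
      obtain ⟨za, zb, hne⟩ := hconst
      have main : ∀ z0 z1 : Z, u z0 < u z1 →
          ∃ a b : ℝ, 0 < a ∧ ∀ z : Z, u' z = a * u z + b := by
        intro z0 z1 hlt
        have hd : (0:ℝ) < u z1 - u z0 := by linarith
        have hlt' : u' z0 < u' z1 := by
          have := (hiff (dirac z1) (dirac z0)).mp
            (by rw [EU_dirac, EU_dirac]; exact hlt)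
          rw [EU_dirac, EU_dirac] at this; linarith
        refine ⟨(u' z1 - u' z0) / (u z1 - u z0),
          u' z0 - (u' z1 - u' z0) / (u z1 - u z0) * u z0,
          div_pos (by linarith) hd, fun z => ?_⟩
        have key : (u' z - u' z0) * (u z1 - u z0) = (u z - u z0) * (u' z1 - u' z0) := by
          rcases le_or_gt (u z) (u z0) with hle | hgt
          · set α := (u z1 - u z0) / (u z1 - u z) with hα
            have hden : (0:ℝ) < u z1 - u z := by linarith
            have h0 : 0 ≤ α := le_of_lt (div_pos hd hden)
            have h1 : α ≤ 1 := by rw [hα, div_le_one hden]; linarith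
            have hαd : α * (u z1 - u z) = u z1 - u z0 := by
              rw [hα]; field_simp
            have hm : EU u (Lottery.mix α (dirac z) (dirac z1)) = EU u (dirac z0) := by
              rw [EU_mix u _ _ h0 h1, EU_dirac, EU_dirac, EU_dirac, hα]
              have : u z1 - u z ≠ 0 := ne_of_gt hden
              field_simp
              ring
            have this2 := heq _ _ hm
            rw [EU_mix u' _ _ h0 h1, EU_dirac, EU_dirac, EU_dirac] at this2
            linear_combination (u z1 - u z) * this2 + (u' z1 - u' z) * hαd
          · rcases le_or_gt (u z) (u z1) with hle2 | hgt2
            · set α := (u z - u z0) / (u z1 - u z0) with hα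
              have h0 : 0 ≤ α := le_of_lt (div_pos (by linarith) hd)
              have h1 : α ≤ 1 := by rw [hα, div_le_one hd]; linarith
              have hαd : α * (u z1 - u z0) = u z - u z0 := by
                rw [hα]; field_simp
              have hm : EU u (Lottery.mix α (dirac z1) (dirac z0)) = EU u (dirac z) := by
                rw [EU_mix u _ _ h0 h1, EU_dirac, EU_dirac, EU_dirac, hα]
                have : u z1 - u z0 ≠ 0 := ne_of_gt hd
                field_simp
                ring
              have this2 := heq _ _ hm
              rw [EU_mix u' _ _ h0 h1, EU_dirac, EU_dirac, EU_dirac] at this2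
              linear_combination (-(u z1 - u z0)) * this2 + (u' z1 - u' z0) * hαd
            · set α := (u z1 - u z0) / (u z - u z0) with hα
              have hden : (0:ℝ) < u z - u z0 := by linarith
              have h0 : 0 ≤ α := le_of_lt (div_pos hd hden)
              have h1 : α ≤ 1 := by rw [hα, div_le_one hden]; linarith
              have hαd : α * (u z - u z0) = u z1 - u z0 := by
                rw [hα]; field_simp
              have hm : EU u (Lottery.mix α (dirac z) (dirac z0)) = EU u (dirac z1) := by
                rw [EU_mix u _ _ h0 h1, EU_dirac, EU_dirac, EU_dirac, hα]
                have : u z - u z0 ≠ 0 := ne_of_gt hden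
                field_simp
                ring
              have this2 := heq _ _ hm
              rw [EU_mix u' _ _ h0 h1, EU_dirac, EU_dirac, EU_dirac] at this2
              linear_combination (u z - u z0) * this2 + (u' z0 - u' z) * hαd
        have hdne : u z1 - u z0 ≠ 0 := ne_of_gt hd
        field_simp
        linear_combination key
      rcases lt_or_gt_of_ne hne with h | h
      · exact main za zb h
      · exact main zb za h
  · rintro ⟨a, b, ha, hab⟩ p q
    have hu : u' = fun z => a * u z + b := funext hab
    rw [hrep, hu, EU_affine, EU_affine]
    constructor <;> intro h <;> nlinarith
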